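/- Let {f_{i,j}}_{i,j∈{1,2}} and {g_{i,j}}_{i,j∈{1,2}} be two compatible families on [0,1] with a common comparison function φ: each h_{i,j} is strictly increasing, satisfies |h_{i,j}(x) − h_{i,j}(y)| ≤ φ(|x−y|), and h_{i,1}(0) = 0, h_{i,1}(1) = h_{i,2}(0), h_{i,2}(1) = 1 for i = 1,2. Then there exists a pair of continuous increasing functions φ₁, φ₂ : [0,1] → [0,1] with φᵢ(0)=0, φᵢ(1)=1 solving the system g_{i,j} ∘ φ_j = φ_i ∘ f_{i,j} for all i,j ∈ {1,2}. -/

import Mathlib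

open Filter Topology Set

noncomputable section

/-- A semi-metric: symmetric, vanishing exactly on the diagonal (no triangle inequality). -/
def IsSemiMetric {X : Type*} (d : X → X → NNReal) : Prop :=
  (∀ x y, d x y = d y x) ∧ ∀ x y, d x y = 0 ↔ x = y

/-- Ball of radius `r` around `x`. -/
def SMBall {X : Type*} (d : X → X → NNReal) (x : X) (r : NNReal) : Set X := {y | d x y < r}

/-- The basic triangle function `Φ_d(u,v) = sup{d(x,y) : ∃ z, d(x,z) ≤ u, d(y,z) ≤ v}`. -/
def SMPhi {X : Type*} (d : X → X → NNReal) (u v : NNReal) : ENNReal :=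
  ⨆ (p : X × X) (_ : ∃ z : X, d p.1 z ≤ u ∧ d p.2 z ≤ v), (d p.1 p.2 : ENNReal)

/-- Normal property: the basic triangle function is finite-valued. -/
def SMNormal {X : Type*} (d : X → X → NNReal) : Prop := ∀ u v : NNReal, SMPhi d u v < ⊤

/-- Regular property: the basic triangle function is continuous at `(0,0)`. -/
def SMRegular {X : Type*} (d : X → X → NNReal) : Prop :=
  ∀ ε : NNReal, 0 < ε → ∃ δ : NNReal, 0 < δ ∧
    ∀ u v : NNReal, u ≤ δ → v ≤ δ → SMPhi d u v < (ε : ENNReal)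

/-- Cauchy sequence with respect to a semi- or pre-metric. -/
def SMCauchy {X : Type*} (d : X → X → NNReal) (x : ℕ → X) : Prop :=
  ∀ ε : NNReal, 0 < ε → ∃ N : ℕ, ∀ m ≥ N, ∀ n ≥ N, d (x m) (x n) < ε

/-- Completeness: every Cauchy sequence converges. -/
def SMComplete {X : Type*} (d : X → X → NNReal) : Prop :=
  ∀ x : ℕ → X, SMCauchy d x → ∃ l : X, Tendsto (fun n => d (x n) l) atTop (𝓝 0)

/-- Boundedness: contained in some ball. -/
def SMBounded {X : Type*} (d : X → X → NNReal) (H : Set X) : Prop :=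
  ∃ (x₀ : X) (r : NNReal), H ⊆ SMBall d x₀ r

/-- Comparison function: increasing, with iterates tending to zero on `(0,∞)`. -/
def SMComparison (φ : NNReal → NNReal) : Prop :=
  Monotone φ ∧ ∀ t : NNReal, 0 < t → Tendsto (fun n => φ^[n] t) atTop (𝓝 0)

/-- Right-continuity of a function `[0,∞) → [0,∞)`. -/
def SMRightCont (φ : NNReal → NNReal) : Prop :=
  ∀ t : NNReal, ContinuousWithinAt φ (Ici t) t

/-- Diameter of a set. -/
def SMdiam {X : Type*} (d : X → X → NNReal) (H : Set X) : ENNReal :=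
  ⨆ (x ∈ H) (y ∈ H), (d x y : ENNReal)

/-- `r`-neighborhood of a set. -/
def SMnbhd {X : Type*} (d : X → X → NNReal) (A : Set X) (r : NNReal) : Set X :=
  ⋃ x ∈ A, SMBall d x r

/-- Kuratowski measure of non-compactness. -/
def SMchi {X : Type*} (d : X → X → NNReal) (H : Set X) : ENNReal :=
  sInf {c : ENNReal | ∃ r : NNReal, c = (r : ENNReal) ∧ 0 < r ∧
    ∃ s : Finset X, H ⊆ ⋃ x ∈ s, SMBall d x r}

/-- Hausdorff-Pompeiu distance between subsets. -/
def SMdHP {X : Type*} (d : X → X → NNReal) (A B : Set X) : ENNReal :=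
  sInf {c : ENNReal | ∃ r : NNReal, c = (r : ENNReal) ∧ 0 < r ∧
    A ⊆ SMnbhd d B r ∧ B ⊆ SMnbhd d A r}

/-- Open sets of the semi-metric topology. -/
def SMOpen {X : Type*} (d : X → X → NNReal) (U : Set X) : Prop :=
  ∀ x ∈ U, ∃ r : NNReal, 0 < r ∧ SMBall d x r ⊆ U

/-- Closed sets of the semi-metric topology. -/
def SMClosed {X : Type*} (d : X → X → NNReal) (A : Set X) : Prop := SMOpen d Aᶜ

/-- Max semi-metric on `X^q`. -/
def SMmax {X : Type*} (q : ℕ) (d : X → X → NNReal) (x y : Fin q → X) : NNReal :=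
  Finset.univ.sup fun i => d (x i) (y i)

open Function

/-- bundled system hypotheses -/
def SysHyp (φ : NNReal → NNReal) (f g : Fin 2 → Fin 2 → ℝ → ℝ) : Prop :=
  SMComparison φ ∧
  (∀ i j, StrictMonoOn (f i j) (Set.Icc 0 1) ∧
      Set.MapsTo (f i j) (Set.Icc 0 1) (Set.Icc 0 1) ∧
      ∀ x ∈ Set.Icc (0:ℝ) 1, ∀ y ∈ Set.Icc (0:ℝ) 1,
        nndist (f i j x) (f i j y) ≤ φ (nndist x y)) ∧
  (∀ i j, StrictMonoOn (g i j) (Set.Icc 0 1) ∧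
      Set.MapsTo (g i j) (Set.Icc 0 1) (Set.Icc 0 1) ∧
      ∀ x ∈ Set.Icc (0:ℝ) 1, ∀ y ∈ Set.Icc (0:ℝ) 1,
        nndist (g i j x) (g i j y) ≤ φ (nndist x y)) ∧
  (∀ i : Fin 2, f i 0 0 = 0 ∧ f i 0 1 = f i 1 0 ∧ f i 1 1 = 1) ∧
  (∀ i : Fin 2, g i 0 0 = 0 ∧ g i 0 1 = g i 1 0 ∧ g i 1 1 = 1)

lemma sm_small (φ : NNReal → NNReal) (hφ : SMComparison φ) {ε : NNReal} (hε : 0 < ε) :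
    ∃ δ : NNReal, 0 < δ ∧ φ δ < ε := by
  by_contra h
  push_neg at h
  have key : ∀ n, ε ≤ φ^[n] ε := by
    intro n; induction n with
    | zero => simp
    | succ n ih =>
      rw [Function.iterate_succ_apply']
      exact h _ (lt_of_lt_of_le hε ih)
  have hlim : ε ≤ 0 := ge_of_tendsto (hφ.2 ε hε) (Filter.Eventually.of_forall key)
  exact absurd (le_antisymm hlim (zero_le : 0 ≤ ε)) hε.ne'

lemma sm_le (φ : NNReal → NNReal) (hφ : SMComparison φ) (t : NNReal) : φ t ≤ t := by
  rcases eq_or_lt_of_le (zero_le : 0 ≤ t) with rfl | ht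
  · by_contra h
    have h0 : 0 < φ 0 := pos_iff_ne_zero.mpr fun h0 => h (le_of_eq h0)
    obtain ⟨δ, hδ, hφδ⟩ := sm_small φ hφ h0
    exact absurd (hφ.1 (zero_le : 0 ≤ δ)) (not_le.mpr hφδ)
  · by_contra h
    push_neg at h
    have key : ∀ n, t ≤ φ^[n] t := by
      intro n; induction n with
      | zero => simp
      | succ n ih =>
        rw [Function.iterate_succ_apply']
        exact le_trans h.le (hφ.1 ih)
    have hlim : t ≤ 0 := ge_of_tendsto (hφ.2 t ht) (Filter.Eventually.of_forall key)
    exact absurd (le_antisymm hlim (zero_le : 0 ≤ t)) ht.ne'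

lemma sm_iter_anti (φ : NNReal → NNReal) (hφ : SMComparison φ) :
    Antitone (fun n => φ^[n] 1) := by
  apply antitone_nat_of_succ_le
  intro n
  rw [Function.iterate_succ_apply']
  exact sm_le φ hφ _

lemma sm_cont (φ : NNReal → NNReal) (hφ : SMComparison φ) (h : ℝ → ℝ)
    (hd : ∀ x ∈ Icc (0:ℝ) 1, ∀ y ∈ Icc (0:ℝ) 1, nndist (h x) (h y) ≤ φ (nndist x y)) :
    ContinuousOn h (Icc 0 1) := by
  rw [Metric.continuousOn_iff]
  intro b hb ε hε
  obtain ⟨δ, hδ, hφδ⟩ := sm_small φ hφ (ε := Real.toNNReal ε) (Real.toNNReal_pos.2 hε)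
  refine ⟨δ, hδ, fun a ha hab => ?_⟩
  have h1 : nndist a b ≤ δ := by
    rw [← NNReal.coe_le_coe, coe_nndist]
    exact hab.le
  have h2 : nndist (h a) (h b) < Real.toNNReal ε :=
    lt_of_le_of_lt (le_trans (hd a ha b hb) (hφ.1 h1)) hφδ
  calc dist (h a) (h b) = (nndist (h a) (h b) : ℝ) := (coe_nndist _ _).symm
    _ < ((Real.toNNReal ε : NNReal) : ℝ) := by exact_mod_cast h2
    _ ≤ ε := le_of_eq (Real.coe_toNNReal ε hε.le)

lemma sm_image (h : ℝ → ℝ) (hm : StrictMonoOn h (Icc 0 1))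
    (hc : ContinuousOn h (Icc 0 1)) : h '' Icc 0 1 = Icc (h 0) (h 1) := by
  apply Subset.antisymm
  · rintro _ ⟨t, ht, rfl⟩
    exact ⟨hm.monotoneOn (left_mem_Icc.2 zero_le_one) ht ht.1,
      hm.monotoneOn ht (right_mem_Icc.2 zero_le_one) ht.2⟩
  · exact intermediate_value_Icc zero_le_one hc

lemma sm_inv_left (h : ℝ → ℝ) (hm : StrictMonoOn h (Icc 0 1)) :
    ∀ t ∈ Icc (0:ℝ) 1, invFunOn h (Icc 0 1) (h t) = t :=
  fun t ht => hm.injOn.leftInvOn_invFunOn ht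

lemma sm_inv_mem (h : ℝ → ℝ) (hm : StrictMonoOn h (Icc 0 1))
    (hc : ContinuousOn h (Icc 0 1)) :
    ∀ x ∈ Icc (h 0) (h 1), invFunOn h (Icc 0 1) x ∈ Icc (0:ℝ) 1 ∧
      h (invFunOn h (Icc 0 1) x) = x := by
  intro x hx
  rw [← sm_image h hm hc] at hx
  obtain ⟨t, ht, rfl⟩ := hx
  exact ⟨Function.invFunOn_mem ⟨t, ht, rfl⟩, Function.invFunOn_eq ⟨t, ht, rfl⟩⟩

lemma sm_inv_mono (h : ℝ → ℝ) (hm : StrictMonoOn h (Icc 0 1))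
    (hc : ContinuousOn h (Icc 0 1)) :
    MonotoneOn (invFunOn h (Icc 0 1)) (Icc (h 0) (h 1)) := by
  intro x hx y hy hxy
  obtain ⟨hax, hfx⟩ := sm_inv_mem h hm hc x hx
  obtain ⟨hay, hfy⟩ := sm_inv_mem h hm hc y hy
  by_contra hlt
  push_neg at hlt
  have := hm hay hax hlt
  rw [hfx, hfy] at this
  exact absurd hxy (not_le.mpr this)

lemma sm_inv_cont (h : ℝ → ℝ) (hm : StrictMonoOn h (Icc 0 1))
    (hc : ContinuousOn h (Icc 0 1)) :
    ContinuousOn (invFunOn h (Icc 0 1)) (Icc (h 0) (h 1)) := by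
  have himg := sm_image h hm hc
  let e : Icc (0:ℝ) 1 ≃ Icc (h 0) (h 1) :=
    { toFun := fun t => ⟨h t.1, by rw [← himg]; exact mem_image_of_mem _ t.2⟩
      invFun := fun x => ⟨invFunOn h (Icc 0 1) x.1, (sm_inv_mem h hm hc x.1 x.2).1⟩
      left_inv := fun t => Subtype.ext (sm_inv_left h hm t.1 t.2)
      right_inv := fun x => Subtype.ext (sm_inv_mem h hm hc x.1 x.2).2 }
  have hcompact : CompactSpace (Icc (0:ℝ) 1) := isCompact_iff_compactSpace.mp isCompact_Icc
  have hce : Continuous e := Continuous.subtype_mk (hc.restrict) _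
  have hsymm : Continuous e.symm := hce.continuous_symm_of_equiv_compact_to_t2
  rw [continuousOn_iff_continuous_restrict]
  have hres : restrict (Icc (h 0) (h 1)) (invFunOn h (Icc 0 1)) =
      fun x => ((e.symm x : Icc (0:ℝ) 1) : ℝ) := rfl
  show Continuous (fun x : Icc (h 0) (h 1) => ((e.symm x : Icc (0:ℝ) 1) : ℝ))
  exact continuous_subtype_val.comp hsymm

lemma contOn_union_closed {F : ℝ → ℝ} {s t : Set ℝ} (hs : IsClosed s) (ht : IsClosed t)
    (hfs : ContinuousOn F s) (hft : ContinuousOn F t) : ContinuousOn F (s ∪ t) := by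
  intro x hx
  rw [continuousWithinAt_union]
  constructor
  · by_cases h : x ∈ s
    · exact hfs x h
    · exact continuousWithinAt_of_notMem_closure (by rwa [hs.closure_eq])
  · by_cases h : x ∈ t
    · exact hft x h
    · exact continuousWithinAt_of_notMem_closure (by rwa [ht.closure_eq])

noncomputable def Tmap (f g : Fin 2 → Fin 2 → ℝ → ℝ) (p : Fin 2 → ℝ → ℝ) : Fin 2 → ℝ → ℝ :=
  fun i x => if x ≤ f i 0 1 then g i 0 (p 0 (Function.invFunOn (f i 0) (Set.Icc 0 1) x))
    else g i 1 (p 1 (Function.invFunOn (f i 1) (Set.Icc 0 1) x))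

lemma Tmap_def (f g : Fin 2 → Fin 2 → ℝ → ℝ) (p : Fin 2 → ℝ → ℝ) (i : Fin 2) (x : ℝ) :
    Tmap f g p i x = if x ≤ f i 0 1 then g i 0 (p 0 (Function.invFunOn (f i 0) (Set.Icc 0 1) x))
    else g i 1 (p 1 (Function.invFunOn (f i 1) (Set.Icc 0 1) x)) := rfl

def GoodPair (p : Fin 2 → ℝ → ℝ) : Prop :=
  ∀ i, ContinuousOn (p i) (Set.Icc 0 1) ∧ MonotoneOn (p i) (Set.Icc 0 1) ∧
    Set.MapsTo (p i) (Set.Icc 0 1) (Set.Icc 0 1) ∧ p i 0 = 0 ∧ p i 1 = 1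

section Sys

variable {φ : NNReal → NNReal} {f g : Fin 2 → Fin 2 → ℝ → ℝ} (H : SysHyp φ f g)

include H

lemma sys_c (i : Fin 2) : 0 < f i 0 1 ∧ f i 0 1 < 1 := by
  obtain ⟨-, hf, -, hfc, -⟩ := H
  constructor
  · have := (hf i 0).1 (left_mem_Icc.2 zero_le_one) (right_mem_Icc.2 zero_le_one) zero_lt_one
    rwa [(hfc i).1] at this
  · have := (hf i 1).1 (left_mem_Icc.2 zero_le_one) (right_mem_Icc.2 zero_le_one) zero_lt_one
    rwa [(hfc i).2.2, ← (hfc i).2.1] at this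

lemma sys_fcont (i j : Fin 2) : ContinuousOn (f i j) (Icc 0 1) :=
  sm_cont φ H.1 (f i j) (H.2.1 i j).2.2

lemma sys_gcont (i j : Fin 2) : ContinuousOn (g i j) (Icc 0 1) :=
  sm_cont φ H.1 (g i j) (H.2.2.1 i j).2.2

/-- membership facts for branch 0 -/
lemma sys_inv0 (i : Fin 2) {x : ℝ} (hx0 : 0 ≤ x) (hxc : x ≤ f i 0 1) :
    Function.invFunOn (f i 0) (Set.Icc 0 1) x ∈ Icc (0:ℝ) 1 ∧
      f i 0 (Function.invFunOn (f i 0) (Set.Icc 0 1) x) = x := by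
  apply sm_inv_mem (f i 0) (H.2.1 i 0).1 (sys_fcont H i 0)
  rw [(H.2.2.2.1 i).1]
  exact ⟨hx0, hxc⟩

/-- membership facts for branch 1 -/
lemma sys_inv1 (i : Fin 2) {x : ℝ} (hx0 : f i 0 1 ≤ x) (hxc : x ≤ 1) :
    Function.invFunOn (f i 1) (Set.Icc 0 1) x ∈ Icc (0:ℝ) 1 ∧
      f i 1 (Function.invFunOn (f i 1) (Set.Icc 0 1) x) = x := by
  apply sm_inv_mem (f i 1) (H.2.1 i 1).1 (sys_fcont H i 1)
  rw [(H.2.2.2.1 i).2.2, ← (H.2.2.2.1 i).2.1]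
  exact ⟨hx0, hxc⟩

lemma Tmap_comp (p : Fin 2 → ℝ → ℝ) (hp : GoodPair p) (i j : Fin 2) :
    ∀ x ∈ Icc (0:ℝ) 1, Tmap f g p i (f i j x) = g i j (p j x) := by
  intro x hx
  have hm0 := (H.2.1 i 0).1
  have hm1 := (H.2.1 i 1).1
  fin_cases j <;> simp only [Fin.zero_eta, Fin.mk_one]
  · have hle : f i 0 x ≤ f i 0 1 := hm0.monotoneOn hx (right_mem_Icc.2 zero_le_one) hx.2
    rw [Tmap_def, if_pos hle, sm_inv_left (f i 0) hm0 x hx]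
  · by_cases hle : f i 1 x ≤ f i 0 1
    · have hxeq : f i 1 x = f i 1 0 := by
        apply le_antisymm (hle.trans (le_of_eq (H.2.2.2.1 i).2.1))
        exact hm1.monotoneOn (left_mem_Icc.2 zero_le_one) hx hx.1
      have hx0 : x = 0 := hm1.injOn hx (left_mem_Icc.2 zero_le_one) hxeq
      subst hx0
      rw [Tmap_def, if_pos hle, hxeq, (H.2.2.2.1 i).2.1.symm,
        sm_inv_left (f i 0) hm0 1 (right_mem_Icc.2 zero_le_one),
        (hp 0).2.2.2.2, (hp 1).2.2.2.1, (H.2.2.2.2 i).2.1]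
    · rw [Tmap_def, if_neg hle, sm_inv_left (f i 1) hm1 x hx]

lemma Tmap_good (p : Fin 2 → ℝ → ℝ) (hp : GoodPair p) : GoodPair (Tmap f g p) := by
  intro i
  obtain ⟨hc0, hc1⟩ := sys_c H i
  have hm0 := (H.2.1 i 0).1
  have hm1 := (H.2.1 i 1).1
  have hfcont0 := sys_fcont H i 0
  have hfcont1 := sys_fcont H i 1
  set c := f i 0 1 with hc
  set inv0 := Function.invFunOn (f i 0) (Set.Icc 0 1) with hinv0
  set inv1 := Function.invFunOn (f i 1) (Set.Icc 0 1) with hinv1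
  set b0 : ℝ → ℝ := fun x => g i 0 (p 0 (inv0 x)) with hb0
  set b1 : ℝ → ℝ := fun x => g i 1 (p 1 (inv1 x)) with hb1
  have hinv0c : inv0 c = 1 := sm_inv_left (f i 0) hm0 1 (right_mem_Icc.2 zero_le_one)
  have hinv00 : inv0 0 = 0 := by
    have h00 : f i 0 0 = 0 := (H.2.2.2.1 i).1
    have h := sm_inv_left (f i 0) hm0 0 (left_mem_Icc.2 zero_le_one)
    rwa [h00] at h
  have hinv1c : inv1 c = 0 := by
    rw [hc, (H.2.2.2.1 i).2.1]; exact sm_inv_left (f i 1) hm1 0 (left_mem_Icc.2 zero_le_one)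
  have hinv11 : inv1 1 = 1 := by
    have h11 : f i 1 1 = 1 := (H.2.2.2.1 i).2.2
    have h := sm_inv_left (f i 1) hm1 1 (right_mem_Icc.2 zero_le_one)
    rwa [h11] at h
  have heq : b0 c = b1 c := by
    show g i 0 (p 0 (inv0 c)) = g i 1 (p 1 (inv1 c))
    rw [hinv0c, hinv1c, (hp 0).2.2.2.2, (hp 1).2.2.2.1, (H.2.2.2.2 i).2.1]
  have hT0 : EqOn (Tmap f g p i) b0 (Icc 0 c) := fun x hx => if_pos hx.2
  have hT1 : EqOn (Tmap f g p i) b1 (Icc c 1) := by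
    intro x hx
    by_cases hxc : x ≤ c
    · have hxe : x = c := le_antisymm hxc hx.1
      rw [hxe]
      calc Tmap f g p i c = b0 c := if_pos le_rfl
        _ = b1 c := heq
    · exact if_neg hxc
  have hmem0 : MapsTo inv0 (Icc 0 c) (Icc 0 1) := fun x hx => (sys_inv0 H i hx.1 hx.2).1
  have hmem1 : MapsTo inv1 (Icc c 1) (Icc 0 1) := fun x hx => (sys_inv1 H i hx.1 hx.2).1
  have hicc0 : Icc (0:ℝ) c = Icc (f i 0 0) (f i 0 1) := by rw [(H.2.2.2.1 i).1, hc]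
  have hicc1 : Icc c (1:ℝ) = Icc (f i 1 0) (f i 1 1) := by
    rw [(H.2.2.2.1 i).2.2, hc, (H.2.2.2.1 i).2.1]
  have hinvc0 : ContinuousOn inv0 (Icc 0 c) := by
    rw [hicc0]; exact sm_inv_cont (f i 0) hm0 hfcont0
  have hinvc1 : ContinuousOn inv1 (Icc c 1) := by
    rw [hicc1]; exact sm_inv_cont (f i 1) hm1 hfcont1
  have hinvm0 : MonotoneOn inv0 (Icc 0 c) := by
    rw [hicc0]; exact sm_inv_mono (f i 0) hm0 hfcont0
  have hinvm1 : MonotoneOn inv1 (Icc c 1) := by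
    rw [hicc1]; exact sm_inv_mono (f i 1) hm1 hfcont1
  have hgc0 := sys_gcont H i 0
  have hgc1 := sys_gcont H i 1
  have hcb0 : ContinuousOn b0 (Icc 0 c) :=
    hgc0.comp (((hp 0).1).comp hinvc0 hmem0) (((hp 0).2.2.1).comp hmem0)
  have hcb1 : ContinuousOn b1 (Icc c 1) :=
    hgc1.comp (((hp 1).1).comp hinvc1 hmem1) (((hp 1).2.2.1).comp hmem1)
  have hmb0 : MonotoneOn b0 (Icc 0 c) := by
    intro x hx y hy hxy
    exact (H.2.2.1 i 0).1.monotoneOn ((hp 0).2.2.1 (hmem0 hx)) ((hp 0).2.2.1 (hmem0 hy))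
      ((hp 0).2.1 (hmem0 hx) (hmem0 hy) (hinvm0 hx hy hxy))
  have hmb1 : MonotoneOn b1 (Icc c 1) := by
    intro x hx y hy hxy
    exact (H.2.2.1 i 1).1.monotoneOn ((hp 1).2.2.1 (hmem1 hx)) ((hp 1).2.2.1 (hmem1 hy))
      ((hp 1).2.1 (hmem1 hx) (hmem1 hy) (hinvm1 hx hy hxy))
  have hsplit : Icc (0:ℝ) 1 = Icc 0 c ∪ Icc c 1 := (Icc_union_Icc_eq_Icc hc0.le hc1.le).symm
  refine ⟨?_, ?_, ?_, ?_, ?_⟩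
  · rw [hsplit]
    exact contOn_union_closed isClosed_Icc isClosed_Icc (hcb0.congr hT0) (hcb1.congr hT1)
  · intro x hx y hy hxy
    by_cases hyc : y ≤ c
    · have hx' : x ∈ Icc 0 c := ⟨hx.1, hxy.trans hyc⟩
      have hy' : y ∈ Icc (0:ℝ) c := ⟨hy.1, hyc⟩
      rw [hT0 hx', hT0 hy']; exact hmb0 hx' hy' hxy
    · by_cases hxc : x ≤ c
      · have hx' : x ∈ Icc 0 c := ⟨hx.1, hxc⟩
        have hy' : y ∈ Icc c 1 := ⟨le_of_not_ge hyc, hy.2⟩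
        have hcc : c ∈ Icc (0:ℝ) c := right_mem_Icc.2 hc0.le
        have hcc' : c ∈ Icc c (1:ℝ) := left_mem_Icc.2 hc1.le
        rw [hT0 hx', hT1 hy']
        calc b0 x ≤ b0 c := hmb0 hx' hcc hxc
          _ = b1 c := heq
          _ ≤ b1 y := hmb1 hcc' hy' (le_of_not_ge hyc)
      · have hx' : x ∈ Icc c 1 := ⟨le_of_not_ge hxc, hx.2⟩
        have hy' : y ∈ Icc c 1 := ⟨le_of_not_ge hyc, hy.2⟩
        rw [hT1 hx', hT1 hy']; exact hmb1 hx' hy' hxy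
  · intro x hx
    by_cases hxc : x ≤ c
    · rw [hT0 ⟨hx.1, hxc⟩]
      exact (H.2.2.1 i 0).2.1 ((hp 0).2.2.1 (hmem0 ⟨hx.1, hxc⟩))
    · rw [hT1 ⟨le_of_not_ge hxc, hx.2⟩]
      exact (H.2.2.1 i 1).2.1 ((hp 1).2.2.1 (hmem1 ⟨le_of_not_ge hxc, hx.2⟩))
  · have h0 : (0:ℝ) ∈ Icc (0:ℝ) c := left_mem_Icc.2 hc0.le
    rw [hT0 h0]
    show g i 0 (p 0 (inv0 0)) = 0
    rw [hinv00, (hp 0).2.2.2.1, (H.2.2.2.2 i).1]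
  · have h1 : (1:ℝ) ∈ Icc c 1 := right_mem_Icc.2 hc1.le
    rw [hT1 h1]
    show g i 1 (p 1 (inv1 1)) = 1
    rw [hinv11, (hp 1).2.2.2.2, (H.2.2.2.2 i).2.2]

lemma Tmap_contr (p q : Fin 2 → ℝ → ℝ) (D : NNReal) (hp : GoodPair p) (hq : GoodPair q)
    (hD : ∀ j, ∀ t ∈ Icc (0:ℝ) 1, nndist (p j t) (q j t) ≤ D) :
    ∀ i, ∀ x ∈ Icc (0:ℝ) 1, nndist (Tmap f g p i x) (Tmap f g q i x) ≤ φ D := by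
  intro i x hx
  by_cases hxc : x ≤ f i 0 1
  · obtain ⟨htmem, -⟩ := sys_inv0 H i hx.1 hxc
    rw [Tmap_def, Tmap_def, if_pos hxc, if_pos hxc]
    calc nndist (g i 0 (p 0 (invFunOn (f i 0) (Icc 0 1) x)))
          (g i 0 (q 0 (invFunOn (f i 0) (Icc 0 1) x)))
        ≤ φ (nndist (p 0 (invFunOn (f i 0) (Icc 0 1) x)) (q 0 (invFunOn (f i 0) (Icc 0 1) x))) :=
          (H.2.2.1 i 0).2.2 _ ((hp 0).2.2.1 htmem) _ ((hq 0).2.2.1 htmem)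
      _ ≤ φ D := H.1.1 (hD 0 _ htmem)
  · obtain ⟨htmem, -⟩ := sys_inv1 H i (le_of_not_ge hxc) hx.2
    rw [Tmap_def, Tmap_def, if_neg hxc, if_neg hxc]
    calc nndist (g i 1 (p 1 (invFunOn (f i 1) (Icc 0 1) x)))
          (g i 1 (q 1 (invFunOn (f i 1) (Icc 0 1) x)))
        ≤ φ (nndist (p 1 (invFunOn (f i 1) (Icc 0 1) x)) (q 1 (invFunOn (f i 1) (Icc 0 1) x))) :=
          (H.2.2.1 i 1).2.2 _ ((hp 1).2.2.1 htmem) _ ((hq 1).2.2.1 htmem)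
      _ ≤ φ D := H.1.1 (hD 1 _ htmem)

end Sys

theorem stmt19 (φ : NNReal → NNReal) (hφ : SMComparison φ)
    (f g : Fin 2 → Fin 2 → ℝ → ℝ)
    (hf : ∀ i j, StrictMonoOn (f i j) (Set.Icc 0 1) ∧
      Set.MapsTo (f i j) (Set.Icc 0 1) (Set.Icc 0 1) ∧
      ∀ x ∈ Set.Icc (0:ℝ) 1, ∀ y ∈ Set.Icc (0:ℝ) 1,
        nndist (f i j x) (f i j y) ≤ φ (nndist x y))
    (hg : ∀ i j, StrictMonoOn (g i j) (Set.Icc 0 1) ∧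
      Set.MapsTo (g i j) (Set.Icc 0 1) (Set.Icc 0 1) ∧
      ∀ x ∈ Set.Icc (0:ℝ) 1, ∀ y ∈ Set.Icc (0:ℝ) 1,
        nndist (g i j x) (g i j y) ≤ φ (nndist x y))
    (hfc : ∀ i : Fin 2, f i 0 0 = 0 ∧ f i 0 1 = f i 1 0 ∧ f i 1 1 = 1)
    (hgc : ∀ i : Fin 2, g i 0 0 = 0 ∧ g i 0 1 = g i 1 0 ∧ g i 1 1 = 1) :
    ∃ p : Fin 2 → ℝ → ℝ,
      (∀ i, ContinuousOn (p i) (Set.Icc 0 1) ∧ MonotoneOn (p i) (Set.Icc 0 1) ∧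
        Set.MapsTo (p i) (Set.Icc 0 1) (Set.Icc 0 1) ∧ p i 0 = 0 ∧ p i 1 = 1) ∧
      ∀ i j, ∀ x ∈ Set.Icc (0:ℝ) 1, g i j (p j x) = p i (f i j x) := by
  classical
  have H : SysHyp φ f g := ⟨hφ, hf, hg, hfc, hgc⟩
  set T := Tmap f g with hT
  set p0 : Fin 2 → ℝ → ℝ := fun _ x => x with hp0
  have hGood0 : GoodPair p0 := by
    intro i
    exact ⟨continuousOn_id, monotoneOn_id, mapsTo_id _, rfl, rfl⟩
  have hGoodIter : ∀ n (q : Fin 2 → ℝ → ℝ), GoodPair q → GoodPair (T^[n] q) := by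
    intro n
    induction n with
    | zero => intro q hq; simpa using hq
    | succ n ih =>
      intro q hq
      rw [Function.iterate_succ_apply']
      exact Tmap_good H _ (ih q hq)
  set u : ℕ → Fin 2 → ℝ → ℝ := fun n => T^[n] p0 with hu
  have hGoodn : ∀ n, GoodPair (u n) := fun n => hGoodIter n p0 hGood0
  have base : ∀ (q r : Fin 2 → ℝ → ℝ), GoodPair q → GoodPair r →
      ∀ j, ∀ t ∈ Icc (0:ℝ) 1, nndist (q j t) (r j t) ≤ 1 := by
    intro q r hq hr j t ht
    have h1 := (hq j).2.2.1 ht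
    have h2 := (hr j).2.2.1 ht
    rw [← NNReal.coe_le_coe, coe_nndist, NNReal.coe_one, Real.dist_eq, abs_le]
    constructor <;> [linarith [h1.1, h2.2]; linarith [h1.2, h2.1]]
  have hiter : ∀ n (q r : Fin 2 → ℝ → ℝ), GoodPair q → GoodPair r → ∀ i, ∀ x ∈ Icc (0:ℝ) 1,
      nndist (T^[n] q i x) (T^[n] r i x) ≤ φ^[n] 1 := by
    intro n
    induction n with
    | zero => intro q r hq hr i x hx; simpa using base q r hq hr i x hx
    | succ n ih =>
      intro q r hq hr i x hx
      rw [Function.iterate_succ_apply' T, Function.iterate_succ_apply' T,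
        Function.iterate_succ_apply' φ]
      exact Tmap_contr H _ _ _ (hGoodIter n q hq) (hGoodIter n r hr)
        (fun j t ht => ih q r hq hr j t ht) i x hx
  have hdistiter : ∀ N m, N ≤ m → ∀ i, ∀ x ∈ Icc (0:ℝ) 1,
      nndist (u m i x) (u N i x) ≤ φ^[N] 1 := by
    intro N m hNm i x hx
    have hm : u m = T^[N] (T^[m - N] p0) := by
      rw [hu]
      simp only
      rw [← Function.iterate_add_apply]
      congr 1
      omega
    rw [hm]
    exact hiter N _ p0 (hGoodIter _ _ hGood0) hGood0 i x hx
  have hbtend : Tendsto (fun n => ((φ^[n] 1 : NNReal) : ℝ)) atTop (𝓝 0) := by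
    have h := NNReal.tendsto_coe.2 (hφ.2 1 one_pos)
    simpa using h
  have hCauchy : ∀ i, ∀ x ∈ Icc (0:ℝ) 1, CauchySeq (fun n => u n i x) := by
    intro i x hx
    apply cauchySeq_of_le_tendsto_0 (b := fun n => ((φ^[n] 1 : NNReal) : ℝ)) _ hbtend
    intro n m N hn hm
    rcases le_total n m with h | h
    · calc dist (u n i x) (u m i x) = (nndist (u m i x) (u n i x) : ℝ) := by
            rw [coe_nndist, dist_comm]
        _ ≤ ((φ^[n] 1 : NNReal) : ℝ) := NNReal.coe_le_coe.2 (hdistiter n m h i x hx)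
        _ ≤ ((φ^[N] 1 : NNReal) : ℝ) := NNReal.coe_le_coe.2 (sm_iter_anti φ hφ hn)
    · calc dist (u n i x) (u m i x) = (nndist (u n i x) (u m i x) : ℝ) := (coe_nndist _ _).symm
        _ ≤ ((φ^[m] 1 : NNReal) : ℝ) := NNReal.coe_le_coe.2 (hdistiter m n h i x hx)
        _ ≤ ((φ^[N] 1 : NNReal) : ℝ) := NNReal.coe_le_coe.2 (sm_iter_anti φ hφ hm)
  set p : Fin 2 → ℝ → ℝ := fun i x => limUnder atTop (fun n => u n i x) with hp
  have htend : ∀ i, ∀ x ∈ Icc (0:ℝ) 1, Tendsto (fun n => u n i x) atTop (𝓝 (p i x)) :=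
    fun i x hx => (hCauchy i x hx).tendsto_limUnder
  have hub : ∀ N i, ∀ x ∈ Icc (0:ℝ) 1, dist (u N i x) (p i x) ≤ ((φ^[N] 1 : NNReal) : ℝ) := by
    intro N i x hx
    have h1 : Tendsto (fun m => dist (u N i x) (u m i x)) atTop (𝓝 (dist (u N i x) (p i x))) :=
      tendsto_const_nhds.dist (htend i x hx)
    apply le_of_tendsto h1
    filter_upwards [eventually_ge_atTop N] with m hm
    calc dist (u N i x) (u m i x) = (nndist (u m i x) (u N i x) : ℝ) := by
          rw [coe_nndist, dist_comm]
      _ ≤ ((φ^[N] 1 : NNReal) : ℝ) := NNReal.coe_le_coe.2 (hdistiter N m hm i x hx)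
  have hunif : ∀ i, TendstoUniformlyOn (fun n x => u n i x) (p i) atTop (Icc 0 1) := by
    intro i
    rw [Metric.tendstoUniformlyOn_iff]
    intro ε hε
    filter_upwards [hbtend.eventually_lt_const hε] with n hn x hx
    calc dist (p i x) (u n i x) = dist (u n i x) (p i x) := dist_comm _ _
      _ ≤ ((φ^[n] 1 : NNReal) : ℝ) := hub n i x hx
      _ < ε := hn
  have hcont : ∀ i, ContinuousOn (p i) (Icc 0 1) :=
    fun i => (hunif i).continuousOn (Frequently.of_forall fun n => (hGoodn n i).1)
  have hmono : ∀ i, MonotoneOn (p i) (Icc 0 1) := fun i x hx y hy hxy =>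
    le_of_tendsto_of_tendsto (htend i x hx) (htend i y hy)
      (Eventually.of_forall fun n => (hGoodn n i).2.1 hx hy hxy)
  have hmaps : ∀ i, MapsTo (p i) (Icc 0 1) (Icc 0 1) := fun i x hx =>
    isClosed_Icc.mem_of_tendsto (htend i x hx)
      (Eventually.of_forall fun n => (hGoodn n i).2.2.1 hx)
  have hzero : ∀ i, p i 0 = 0 := by
    intro i
    have he : (fun n => u n i 0) = fun _ => (0:ℝ) := funext fun n => (hGoodn n i).2.2.2.1
    exact tendsto_nhds_unique (htend i 0 (left_mem_Icc.2 zero_le_one))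
      (he ▸ tendsto_const_nhds)
  have hone : ∀ i, p i 1 = 1 := by
    intro i
    have he : (fun n => u n i 1) = fun _ => (1:ℝ) := funext fun n => (hGoodn n i).2.2.2.2
    exact tendsto_nhds_unique (htend i 1 (right_mem_Icc.2 zero_le_one))
      (he ▸ tendsto_const_nhds)
  refine ⟨p, fun i => ⟨hcont i, hmono i, hmaps i, hzero i, hone i⟩, ?_⟩
  intro i j x hx
  have hy : f i j x ∈ Icc (0:ℝ) 1 := (hf i j).2.1 hx
  have h2 : ∀ n, u (n + 1) i (f i j x) = g i j (u n j x) := by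
    intro n
    have hstep : u (n + 1) = T (u n) := Function.iterate_succ_apply' T n p0
    rw [hstep]
    exact Tmap_comp H (u n) (hGoodn n) i j x hx
  have h1 : Tendsto (fun n => g i j (u n j x)) atTop (𝓝 (p i (f i j x))) := by
    have h := (htend i (f i j x) hy).comp (tendsto_add_atTop_nat 1)
    simpa only [Function.comp_def, h2] using h
  have h3 : Tendsto (fun n => g i j (u n j x)) atTop (𝓝 (g i j (p j x))) := by
    have hseq : Tendsto (fun n => u n j x) atTop (𝓝[Icc (0:ℝ) 1] (p j x)) :=
      tendsto_nhdsWithin_iff.2 ⟨htend j x hx, Eventually.of_forall fun n => (hGoodn n j).2.2.1 hx⟩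
    exact ((sys_gcont H i j) (p j x) (hmaps j hx)).tendsto.comp hseq
  exact tendsto_nhds_unique h3 h1
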